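/- Let J̃ = Φ⊗r* be the fixed point of Π_M T. Then ||J̃ − J*||_∞ ≤ (1/(1−α)) ||Π_M J* − J*||_∞. -/

import Mathlib

/-- (Φ⊗r)(i) = min_j (φ_j(i) + r(j)) : min-plus linear combination. -/
noncomputable def minplusComb {n k : ℕ} (φ : Fin k → Fin n → ℝ) (r : Fin k → ℝ) :
    Fin n → ℝ := fun i => ⨅ j, (φ j i + r j)

/-- r^u(j) = −min_i (φ_j(i) − u(i)). -/
noncomputable def minplusCoeff {n k : ℕ} (φ : Fin k → Fin n → ℝ) (u : Fin n → ℝ) :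
    Fin k → ℝ := fun j => -(⨅ i, (φ j i - u i))

/-- Π_M u = Φ ⊗ r^u : the min-plus projection onto the span of φ₁,…,φ_k. -/
noncomputable def minplusProj {n k : ℕ} (φ : Fin k → Fin n → ℝ) (u : Fin n → ℝ) :
    Fin n → ℝ := minplusComb φ (minplusCoeff φ u)

private lemma ciInf_le_ciInf_add' {ι : Type*} [Fintype ι] [Nonempty ι]
    (f g : ι → ℝ) {c : ℝ} (h : ∀ x, f x ≤ g x + c) :
    (⨅ x, f x) ≤ (⨅ x, g x) + c := by
  rw [← sub_le_iff_le_add]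
  refine le_ciInf fun x => ?_
  rw [sub_le_iff_le_add]
  exact (ciInf_le (Set.Finite.bddBelow (Set.finite_range f)) x).trans (h x)

private lemma abs_ciInf_sub_ciInf' {ι : Type*} [Fintype ι] [Nonempty ι]
    (f g : ι → ℝ) {c : ℝ} (h : ∀ x, |f x - g x| ≤ c) :
    |(⨅ x, f x) - ⨅ x, g x| ≤ c := by
  rw [abs_sub_le_iff]
  constructor
  · rw [sub_le_iff_le_add']
    exact ciInf_le_ciInf_add' f g fun x => by
      have := (abs_sub_le_iff.mp (h x)).1; linarith
  · rw [sub_le_iff_le_add']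
    exact ciInf_le_ciInf_add' g f fun x => by
      have := (abs_sub_le_iff.mp (h x)).2; linarith

private lemma abs_ciSup_sub_ciSup' {ι : Type*} [Fintype ι] [Nonempty ι]
    (f g : ι → ℝ) {c : ℝ} (h : ∀ x, |f x - g x| ≤ c) :
    |(⨆ x, f x) - ⨆ x, g x| ≤ c := by
  have key : ∀ f g : ι → ℝ, (∀ x, f x ≤ g x + c) → (⨆ x, f x) ≤ (⨆ x, g x) + c := by
    intro f g h
    exact ciSup_le fun x => (h x).trans
      (add_le_add_left (le_ciSup (Set.Finite.bddAbove (Set.finite_range g)) x) c)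
  rw [abs_sub_le_iff]
  constructor
  · rw [sub_le_iff_le_add']
    exact key f g fun x => by have := (abs_sub_le_iff.mp (h x)).1; linarith
  · rw [sub_le_iff_le_add']
    exact key g f fun x => by have := (abs_sub_le_iff.mp (h x)).2; linarith

/-- The min-plus projection is sup-norm nonexpansive, componentwise. -/
private lemma minplusProj_nonexpansive {n k : ℕ} [NeZero n] [NeZero k]
    (φ : Fin k → Fin n → ℝ) (u v : Fin n → ℝ) (i : Fin n) :
    |minplusProj φ u i - minplusProj φ v i| ≤ ‖u - v‖ := by
  have hcoef : ∀ j, |minplusCoeff φ u j - minplusCoeff φ v j| ≤ ‖u - v‖ := by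
    intro j
    unfold minplusCoeff
    rw [neg_sub_neg, abs_sub_comm]
    refine abs_ciInf_sub_ciInf' _ _ fun x => ?_
    have : (φ j x - u x) - (φ j x - v x) = -(u x - v x) := by ring
    rw [this, abs_neg]
    exact (norm_le_pi_norm (u - v) x)
  unfold minplusProj minplusComb
  refine abs_ciInf_sub_ciInf' _ _ fun j => ?_
  have : (φ j i + minplusCoeff φ u j) - (φ j i + minplusCoeff φ v j)
      = minplusCoeff φ u j - minplusCoeff φ v j := by ring
  rw [this]
  exact hcoef j

/-- Error bound for the fixed point of Π_M ∘ T: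
‖J̃ − J*‖_∞ ≤ (1/(1−α)) ‖Π_M J* − J*‖_∞. -/
theorem minplus_projected_bellman_error {n k : ℕ} [NeZero n] [NeZero k]
    {A : Type*} [Fintype A] [Nonempty A]
    (p : A → Fin n → Fin n → ℝ)
    (hp : ∀ a s s', 0 ≤ p a s s')
    (hp1 : ∀ a s, ∑ s', p a s s' = 1)
    (g : Fin n → ℝ) (α : ℝ) (hα0 : 0 < α) (hα1 : α < 1)
    (T : (Fin n → ℝ) → (Fin n → ℝ))
    (hT : ∀ J s, T J s = ⨆ a : A, (g s + α * ∑ s', p a s s' * J s'))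
    (φ : Fin k → Fin n → ℝ)
    (Jstar : Fin n → ℝ) (hfix : T Jstar = Jstar)
    (Jtilde : Fin n → ℝ) (hfixproj : minplusProj φ (T Jtilde) = Jtilde) :
    ‖Jtilde - Jstar‖ ≤ (1 / (1 - α)) * ‖minplusProj φ Jstar - Jstar‖ := by
  set D := ‖Jtilde - Jstar‖ with hD
  set E := ‖minplusProj φ Jstar - Jstar‖ with hE
  have hDnn : 0 ≤ D := norm_nonneg _
  have hEnn : 0 ≤ E := norm_nonneg _
  -- T is an α-contraction, componentwise
  have hcontr : ∀ s, |T Jtilde s - T Jstar s| ≤ α * D := by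
    intro s
    rw [hT, hT]
    refine abs_ciSup_sub_ciSup' _ _ fun a => ?_
    have hsum : (∑ s', p a s s' * Jtilde s') - ∑ s', p a s s' * Jstar s'
        = ∑ s', p a s s' * (Jtilde s' - Jstar s') := by
      rw [← Finset.sum_sub_distrib]
      exact Finset.sum_congr rfl fun x _ => by ring
    have : (g s + α * ∑ s', p a s s' * Jtilde s')
        - (g s + α * ∑ s', p a s s' * Jstar s')
        = α * ∑ s', p a s s' * (Jtilde s' - Jstar s') := by
      rw [← hsum]; ring
    rw [this, abs_mul, abs_of_pos hα0]
    refine mul_le_mul_of_nonneg_left ?_ hα0.le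
    calc |∑ s', p a s s' * (Jtilde s' - Jstar s')|
        ≤ ∑ s', |p a s s' * (Jtilde s' - Jstar s')| := Finset.abs_sum_le_sum_abs _ _
      _ ≤ ∑ s', p a s s' * D := by
          refine Finset.sum_le_sum fun x _ => ?_
          rw [abs_mul, abs_of_nonneg (hp a s x)]
          exact mul_le_mul_of_nonneg_left (norm_le_pi_norm (Jtilde - Jstar) x) (hp a s x)
      _ = D := by rw [← Finset.sum_mul, hp1, one_mul]
  -- main componentwise bound
  have hmain : D ≤ α * D + E := by
    have h0 : 0 ≤ α * D + E := by positivity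
    rw [hD]
    refine (pi_norm_le_iff_of_nonneg h0).mpr fun i => ?_
    have h1 : |Jtilde i - minplusProj φ Jstar i| ≤ α * D := by
      calc |Jtilde i - minplusProj φ Jstar i|
          = |minplusProj φ (T Jtilde) i - minplusProj φ Jstar i| := by rw [hfixproj]
        _ ≤ ‖T Jtilde - Jstar‖ := by
            have := minplusProj_nonexpansive φ (T Jtilde) (T Jstar) i
            rwa [hfix] at this
        _ ≤ α * D := by
            refine (pi_norm_le_iff_of_nonneg (by positivity)).mpr fun s => ?_
            simp only [Pi.sub_apply, Real.norm_eq_abs]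
            rw [show Jstar s = T Jstar s by rw [hfix]]
            exact hcontr s
    have h2 : |minplusProj φ Jstar i - Jstar i| ≤ E :=
      norm_le_pi_norm (minplusProj φ Jstar - Jstar) i
    have heq : (Jtilde - Jstar) i = (Jtilde i - minplusProj φ Jstar i)
        + (minplusProj φ Jstar i - Jstar i) := by
      simp only [Pi.sub_apply]; ring
    rw [Real.norm_eq_abs, heq]
    exact (abs_add_le _ _).trans (add_le_add h1 h2)
  have h1α : 0 < 1 - α := by linarith
  rw [div_mul_eq_mul_div, one_mul, le_div_iff₀ h1α]
  nlinarith
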